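/- Whether an initial distribution is sure / almost-sure / limit-sure winning for eventually synchronizing in T (with exact support U) depends only on the support of the distribution: if Supp(d) = Supp(d') then d is winning iff d' is winning, for each of the three modes. -/

import Mathlib

open Finset

structure MDP (Q A : Type) [Fintype Q] [Fintype A] where
  δ : Q → A → Q → ℝ
  nonneg : ∀ q a q', 0 ≤ δ q a q'
  sum_one : ∀ q a, ∑ q', δ q a q' = 1

structure Strat (Q A : Type) [Fintype A] where
  σ : List Q → A → ℝ
  nonneg : ∀ h a, 0 ≤ σ h a
  sum_one : ∀ h, ∑ a, σ h a = 1

variable {Q A : Type} [Fintype Q] [DecidableEq Q] [Fintype A]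

/-- Probability of a path of length `n` (i.e. `n+1` states) from initial
distribution `μ0` under strategy `α`. The history passed to the strategy is
the list of visited states, most recent first. -/
noncomputable def pathProb (M : MDP Q A) (μ0 : Q → ℝ) (α : Strat Q A)
    {n : ℕ} (π : Fin (n + 1) → Q) : ℝ :=
  μ0 (π 0) *
    ∏ i : Fin n,
      ∑ a,
        α.σ (List.ofFn (fun j : Fin (i.1 + 1) =>
            π ⟨i.1 - j.1, lt_of_le_of_lt (Nat.sub_le i.1 j.1) (Nat.lt_succ_of_lt i.isLt)⟩)) a *
          M.δ (π i.castSucc) a (π i.succ)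

/-- Distribution over states after `n` steps. -/
noncomputable def Mdist (M : MDP Q A) (μ0 : Q → ℝ) (α : Strat Q A) (n : ℕ) (q : Q) : ℝ :=
  ∑ π : Fin (n + 1) → Q, if π (Fin.last n) = q then pathProb M μ0 α π else 0

/-- Probability mass in `T` after `n` steps. -/
noncomputable def Mmass (M : MDP Q A) (μ0 : Q → ℝ) (α : Strat Q A) (n : ℕ) (T : Finset Q) : ℝ :=
  ∑ q ∈ T, Mdist M μ0 α n q

open scoped Classical in
/-- Support of the transition `δ(q,a)`. -/
noncomputable def post (M : MDP Q A) (q : Q) (a : A) : Finset Q :=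
  Finset.univ.filter (fun q' => 0 < M.δ q a q')

open scoped Classical in
/-- One-step predecessor operator. -/
noncomputable def PreM (M : MDP Q A) (S : Finset Q) : Finset Q :=
  Finset.univ.filter (fun q => ∃ a, post M q a ⊆ S)

def IsDist (μ : Q → ℝ) : Prop := (∀ q, 0 ≤ μ q) ∧ ∑ q, μ q = 1

def dirac (q0 : Q) : Q → ℝ := fun q => if q = q0 then (1 : ℝ) else 0

def PureStrat (α : Strat Q A) : Prop := ∀ h, ∃ a, α.σ h a = 1

set_option linter.unusedSectionVars false

lemma snoc_lt {n : ℕ} (p : Fin (n+1) → Q) (x : Q) (k : ℕ) (h2 : k < n+2) (h : k < n+1) :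
    (Fin.snoc p x : Fin (n+2) → Q) ⟨k, h2⟩ = p ⟨k, h⟩ := by
  have : (⟨k, h2⟩ : Fin (n+2)) = Fin.castSucc ⟨k, h⟩ := rfl
  rw [this, Fin.snoc_castSucc]

lemma pathProb_snoc (M : MDP Q A) (μ0 : Q → ℝ) (α : Strat Q A) {n : ℕ}
    (p : Fin (n+1) → Q) (x : Q) :
    pathProb M μ0 α (Fin.snoc p x) =
      pathProb M μ0 α p *
        ∑ a, α.σ (List.ofFn (fun j : Fin (n+1) =>
            p ⟨n - j.1, Nat.lt_succ_of_le (Nat.sub_le n j.1)⟩)) a *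
          M.δ (p (Fin.last n)) a x := by
  unfold pathProb
  rw [Fin.prod_univ_castSucc, mul_assoc]
  congr 2
  · apply Finset.prod_congr rfl
    intro i _
    apply Finset.sum_congr rfl
    intro a _
    congr 1
    · congr 1
      have : ∀ (j : Fin (i.1 + 1)) (h2 : i.1 - j.1 < n + 2) (h : i.1 - j.1 < n + 1),
          (Fin.snoc p x : Fin (n+2) → Q) ⟨i.1 - j.1, h2⟩ = p ⟨i.1 - j.1, h⟩ :=
        fun j h2 h => snoc_lt p x _ h2 h
      simp only [Fin.coe_castSucc]
      congr 1
      funext j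
      exact this j _ (lt_of_le_of_lt (Nat.sub_le _ _) (Nat.lt_succ_of_lt i.isLt))
    · congr 1
      · exact snoc_lt p x i.1 _ (Nat.lt_succ_of_lt i.isLt)
      · exact snoc_lt p x (i.1+1) _ (Nat.succ_lt_succ i.isLt)
  · apply Finset.sum_congr rfl
    intro a _
    congr 1
    · congr 1
      simp only [Fin.val_last]
      congr 1
      funext j
      exact snoc_lt p x _ _ (Nat.lt_succ_of_le (Nat.sub_le n j.1))
    · congr 1
      · exact snoc_lt p x n _ (Nat.lt_succ_self n)
      · simp

lemma sum_pathProb (M : MDP Q A) (μ0 : Q → ℝ) (α : Strat Q A) (n : ℕ) :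
    ∑ π : Fin (n + 1) → Q, pathProb M μ0 α π = ∑ q, μ0 q := by
  induction n with
  | zero =>
      exact Fintype.sum_equiv (Equiv.funUnique (Fin 1) Q) _ μ0
        (fun π => by simp [pathProb, Equiv.funUnique])
  | succ n ih =>
      rw [← Fintype.sum_equiv (Fin.snocEquiv (fun _ => Q)) _ (fun π => pathProb M μ0 α π)
        (fun xp => rfl)]
      rw [Fintype.sum_prod_type_right]
      calc ∑ p : Fin (n+1) → Q, ∑ x : Q, pathProb M μ0 α (Fin.snoc p x)
          = ∑ p : Fin (n+1) → Q, pathProb M μ0 α p := by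
            apply Finset.sum_congr rfl
            intro p _
            simp only [pathProb_snoc]
            rw [← Finset.mul_sum, Finset.sum_comm]
            have : (∑ a : A, ∑ x : Q, α.σ (List.ofFn (fun j : Fin (n+1) =>
                    p ⟨n - j.1, Nat.lt_succ_of_le (Nat.sub_le n j.1)⟩)) a *
                  M.δ (p (Fin.last n)) a x) = 1 := by
              simp_rw [← Finset.mul_sum, M.sum_one, mul_one]
              exact α.sum_one _
            rw [this, mul_one]
        _ = ∑ q, μ0 q := ih

lemma pathProb_nonneg (M : MDP Q A) (μ0 : Q → ℝ) (α : Strat Q A) {n : ℕ}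
    (hμ : ∀ q, 0 ≤ μ0 q) (π : Fin (n + 1) → Q) : 0 ≤ pathProb M μ0 α π := by
  unfold pathProb
  apply mul_nonneg (hμ _)
  apply Finset.prod_nonneg
  intro i _
  exact Finset.sum_nonneg fun a _ => mul_nonneg (α.nonneg _ _) (M.nonneg _ _ _)

lemma pathProb_le (M : MDP Q A) (μ0 μ0' : Q → ℝ) (α : Strat Q A) {n : ℕ} (C : ℝ)
    (h : ∀ q, μ0' q ≤ C * μ0 q) (π : Fin (n + 1) → Q) :
    pathProb M μ0' α π ≤ C * pathProb M μ0 α π := by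
  unfold pathProb
  rw [← mul_assoc]
  apply mul_le_mul_of_nonneg_right (h _)
  apply Finset.prod_nonneg
  intro i _
  exact Finset.sum_nonneg fun a _ => mul_nonneg (α.nonneg _ _) (M.nonneg _ _ _)

open scoped Classical in
lemma Mmass_eq (M : MDP Q A) (μ0 : Q → ℝ) (α : Strat Q A) (n : ℕ) (T : Finset Q) :
    Mmass M μ0 α n T =
      ∑ π : Fin (n + 1) → Q, if π (Fin.last n) ∈ T then pathProb M μ0 α π else 0 := by
  unfold Mmass Mdist
  rw [Finset.sum_comm]
  apply Finset.sum_congr rfl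
  intro π _
  by_cases h : π (Fin.last n) ∈ T
  · rw [if_pos h, Finset.sum_eq_single_of_mem (π (Fin.last n)) h (by intro b _ hb; simp [Ne.symm hb]),
      if_pos rfl]
  · rw [if_neg h]
    apply Finset.sum_eq_zero
    intro q hq
    rw [if_neg]
    rintro rfl
    exact h hq

open scoped Classical in
lemma badmass_eq (M : MDP Q A) (μ0 : Q → ℝ) (α : Strat Q A) (n : ℕ) (T : Finset Q)
    (hμ : IsDist μ0) :
    1 - Mmass M μ0 α n T =
      ∑ π : Fin (n + 1) → Q, if π (Fin.last n) ∈ T then 0 else pathProb M μ0 α π := by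
  rw [Mmass_eq, ← hμ.2, ← sum_pathProb M μ0 α n, ← Finset.sum_sub_distrib]
  apply Finset.sum_congr rfl
  intro π _
  by_cases h : π (Fin.last n) ∈ T <;> simp [h]
lemma ratio_exists (d d' : Q → ℝ) (hd : IsDist d) (hd' : IsDist d')
    (hsupp : {q | 0 < d q} = {q | 0 < d' q}) :
    ∃ C : ℝ, 0 < C ∧ ∀ q, d' q ≤ C * d q := by
  classical
  refine ⟨(∑ q, if 0 < d q then d' q / d q else 0) + 1, ?_, ?_⟩
  · have : 0 ≤ ∑ q, if 0 < d q then d' q / d q else 0 :=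
      Finset.sum_nonneg fun q _ => by
        by_cases h : 0 < d q
        · simpa [h] using div_nonneg (hd'.1 q) (le_of_lt h)
        · simp [h]
    linarith
  · intro q
    by_cases h : 0 < d q
    · have h1 : d' q / d q ≤ ∑ r, if 0 < d r then d' r / d r else 0 := by
        have := Finset.single_le_sum (f := fun r => if 0 < d r then d' r / d r else 0)
          (fun r _ => by
            by_cases hr : 0 < d r
            · simpa [hr] using div_nonneg (hd'.1 r) (le_of_lt hr)
            · simp [hr]) (Finset.mem_univ q)
        simpa [h] using this
      have h2 : d' q / d q ≤ (∑ r, if 0 < d r then d' r / d r else 0) + 1 := by linarith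
      calc d' q = (d' q / d q) * d q := by field_simp
        _ ≤ ((∑ r, if 0 < d r then d' r / d r else 0) + 1) * d q :=
            mul_le_mul_of_nonneg_right h2 (le_of_lt h)
    · have hdq : d q = 0 := le_antisymm (not_lt.mp h) (hd.1 q)
      have : ¬ 0 < d' q := by
        intro hq
        have hmem : q ∈ {q | 0 < d' q} := hq
        rw [← hsupp] at hmem
        exact h hmem
      have hdq' : d' q = 0 := le_antisymm (not_lt.mp this) (hd'.1 q)
      simp [hdq, hdq']

lemma badmass_le (M : MDP Q A) (d d' : Q → ℝ) (hd : IsDist d) (hd' : IsDist d')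
    (C : ℝ) (hC : ∀ q, d' q ≤ C * d q)
    (α : Strat Q A) (n : ℕ) (T : Finset Q) :
    1 - Mmass M d' α n T ≤ C * (1 - Mmass M d α n T) := by
  classical
  rw [badmass_eq M d α n T hd, badmass_eq M d' α n T hd', Finset.mul_sum]
  apply Finset.sum_le_sum
  intro π _
  by_cases h : π (Fin.last n) ∈ T
  · simp [h]
  · simp only [if_neg h]
    exact pathProb_le M d d' α C hC π

lemma badmass_nonneg (M : MDP Q A) (d : Q → ℝ) (hd : IsDist d)
    (α : Strat Q A) (n : ℕ) (T : Finset Q) :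
    0 ≤ 1 - Mmass M d α n T := by
  classical
  rw [badmass_eq M d α n T hd]
  exact Finset.sum_nonneg fun π _ => by
    by_cases h : π (Fin.last n) ∈ T <;> simp [h, pathProb_nonneg M d α hd.1 π]

lemma mass_eq_one_transfer (M : MDP Q A) (d d' : Q → ℝ) (hd : IsDist d) (hd' : IsDist d')
    (hsupp : {q | 0 < d q} = {q | 0 < d' q})
    (α : Strat Q A) (n : ℕ) (T : Finset Q)
    (h : Mmass M d α n T = 1) : Mmass M d' α n T = 1 := by
  obtain ⟨C, hC0, hC⟩ := ratio_exists d d' hd hd' hsupp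
  have h1 := badmass_le M d d' hd hd' C hC α n T
  have h2 := badmass_nonneg M d' hd' α n T
  rw [h] at h1
  simp only [sub_self, mul_zero] at h1
  linarith

lemma mass_ge_transfer (M : MDP Q A) (d d' : Q → ℝ) (hd : IsDist d) (hd' : IsDist d')
    (hsupp : {q | 0 < d q} = {q | 0 < d' q}) :
    ∃ C : ℝ, 0 < C ∧ ∀ (α : Strat Q A) (n : ℕ) (T : Finset Q) (ε : ℝ),
      1 - ε / C ≤ Mmass M d α n T → 1 - ε ≤ Mmass M d' α n T := by
  obtain ⟨C, hC0, hC⟩ := ratio_exists d d' hd hd' hsupp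
  refine ⟨C, hC0, fun α n T ε h => ?_⟩
  have h1 := badmass_le M d d' hd hd' C hC α n T
  have h2 : 1 - Mmass M d α n T ≤ ε / C := by linarith
  have h3 : C * (1 - Mmass M d α n T) ≤ C * (ε / C) :=
    mul_le_mul_of_nonneg_left h2 (le_of_lt hC0)
  rw [mul_div_cancel₀ _ (ne_of_gt hC0)] at h3
  linarith


/-- Whether an initial distribution is sure / almost-sure / limit-sure winning for
eventually synchronizing in `T` with exact support `U` depends only on its support. -/
theorem winning_modes_support_invariant {Q A : Type} [Fintype Q] [DecidableEq Q]
    [Fintype A] [Nonempty Q] [Nonempty A]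
    (M : MDP Q A) (T U : Finset Q) (hTU : T ⊆ U)
    (d d' : Q → ℝ) (hd : IsDist d) (hd' : IsDist d')
    (hsupp : {q | 0 < d q} = {q | 0 < d' q}) :
    ((∃ (α : Strat Q A) (n : ℕ), Mmass M d α n T = 1 ∧ Mmass M d α n U = 1) ↔
      (∃ (α : Strat Q A) (n : ℕ), Mmass M d' α n T = 1 ∧ Mmass M d' α n U = 1)) ∧
    ((∃ α : Strat Q A, ∀ ε : ℝ, 0 < ε → ∃ n : ℕ,
        1 - ε ≤ Mmass M d α n T ∧ Mmass M d α n U = 1) ↔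
      (∃ α : Strat Q A, ∀ ε : ℝ, 0 < ε → ∃ n : ℕ,
        1 - ε ≤ Mmass M d' α n T ∧ Mmass M d' α n U = 1)) ∧
    ((∀ ε : ℝ, 0 < ε → ∃ (α : Strat Q A) (n : ℕ),
        1 - ε ≤ Mmass M d α n T ∧ Mmass M d α n U = 1) ↔
      (∀ ε : ℝ, 0 < ε → ∃ (α : Strat Q A) (n : ℕ),
        1 - ε ≤ Mmass M d' α n T ∧ Mmass M d' α n U = 1)) := by
  
  obtain ⟨Cd, hCd0, hKd⟩ := mass_ge_transfer M d d' hd hd' hsupp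
  obtain ⟨Ce, hCe0, hKe⟩ := mass_ge_transfer M d' d hd' hd hsupp.symm
  refine ⟨⟨?_, ?_⟩, ⟨?_, ?_⟩, ⟨?_, ?_⟩⟩
  · rintro ⟨α, n, hT, hU⟩
    exact ⟨α, n, mass_eq_one_transfer M d d' hd hd' hsupp α n T hT,
      mass_eq_one_transfer M d d' hd hd' hsupp α n U hU⟩
  · rintro ⟨α, n, hT, hU⟩
    exact ⟨α, n, mass_eq_one_transfer M d' d hd' hd hsupp.symm α n T hT,
      mass_eq_one_transfer M d' d hd' hd hsupp.symm α n U hU⟩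
  · rintro ⟨α, h⟩
    refine ⟨α, fun ε hε => ?_⟩
    obtain ⟨n, h1, h2⟩ := h (ε / Cd) (div_pos hε hCd0)
    exact ⟨n, hKd α n T ε h1, mass_eq_one_transfer M d d' hd hd' hsupp α n U h2⟩
  · rintro ⟨α, h⟩
    refine ⟨α, fun ε hε => ?_⟩
    obtain ⟨n, h1, h2⟩ := h (ε / Ce) (div_pos hε hCe0)
    exact ⟨n, hKe α n T ε h1, mass_eq_one_transfer M d' d hd' hd hsupp.symm α n U h2⟩
  · intro h ε hε
    obtain ⟨α, n, h1, h2⟩ := h (ε / Cd) (div_pos hε hCd0)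
    exact ⟨α, n, hKd α n T ε h1, mass_eq_one_transfer M d d' hd hd' hsupp α n U h2⟩
  · intro h ε hε
    obtain ⟨α, n, h1, h2⟩ := h (ε / Ce) (div_pos hε hCe0)
    exact ⟨α, n, hKe α n T ε h1, mass_eq_one_transfer M d' d hd' hd hsupp.symm α n U h2⟩
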